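/- The Minkowski type function M_π is nowhere monotonic on [0,1): for every nondegenerate subinterval I of [0,1), the restriction of M_π to I is neither monotone nondecreasing nor monotone nonincreasing; that is, there exist points y_1 < y_2 in I with M_π(y_1) < M_π(y_2) and points z_1 < z_2 in I with M_π(z_1) > M_π(z_2). -/

import Mathlib

open scoped BigOperators
open MeasureTheory

/-- `p̂_j = p_1 + ⋯ + p_{j-1}` (so `p̂_1 = 0`). -/
noncomputable def phat (p : ℕ → ℝ) (j : ℕ) : ℝ := ∑ m ∈ Finset.Ico 1 j, p m

/-- The expansion `π_P((i_k)) = p̂_{i_1} + ∑_{k≥1} p̂_{i_{k+1}} · p_{i_1} ⋯ p_{i_k}`,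
with the digit sequence `i : ℕ → ℕ` indexed from 0 (so `i 0 = i_1`). -/
noncomputable def piP (p : ℕ → ℝ) (i : ℕ → ℕ) : ℝ :=
  phat p (i 0) + ∑' k : ℕ, phat p (i (k + 1)) * ∏ m ∈ Finset.range (k + 1), p (i m)

/-- The value `∑_{k≥1} (−1)^{k−1} 2^{1−(i_1+⋯+i_k)}` of the Minkowski type function
on the point with digit sequence `i` (indexed from 0). -/
noncomputable def Mseq (i : ℕ → ℕ) : ℝ :=
  ∑' k : ℕ, (-1 : ℝ) ^ k * (2 : ℝ) ^ ((1 : ℤ) - ∑ m ∈ Finset.range (k + 1), (i m : ℤ))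

/- ### Auxiliary machinery -/

/-- The finite partial expansion. -/
noncomputable def fpi (p : ℕ → ℝ) (i : ℕ → ℕ) (N : ℕ) : ℝ :=
  ∑ k ∈ Finset.range N, phat p (i k) * ∏ m ∈ Finset.range k, p (i m)

lemma phat_one (p : ℕ → ℝ) : phat p 1 = 0 := by simp [phat]

lemma fpi_congr (p : ℕ → ℝ) (i i' : ℕ → ℕ) (N : ℕ) (h : ∀ k < N, i k = i' k) :
    fpi p i N = fpi p i' N := by
  unfold fpi
  refine Finset.sum_congr rfl fun k hk => ?_
  rw [Finset.mem_range] at hk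
  rw [h k hk]
  congr 1
  refine Finset.prod_congr rfl fun m hm => ?_
  rw [Finset.mem_range] at hm
  rw [h m (hm.trans hk)]

lemma piP_eventually_one (p : ℕ → ℝ) (i : ℕ → ℕ) (N : ℕ) (h1 : ∀ k, N ≤ k → i k = 1) :
    piP p i = fpi p i N := by
  cases N with
  | zero =>
    have h1' : ∀ k, i k = 1 := fun k => h1 k (Nat.zero_le k)
    simp [piP, fpi, h1', phat_one]
  | succ M =>
    have hz : ∀ k ∉ Finset.range M,
        phat p (i (k + 1)) * ∏ m ∈ Finset.range (k + 1), p (i m) = 0 := by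
      intro k hk
      rw [Finset.mem_range, not_lt] at hk
      rw [h1 (k + 1) (by omega), phat_one, zero_mul]
    rw [piP, tsum_eq_sum hz, fpi, Finset.sum_range_succ']
    simp [add_comm]

lemma Mseq_summable (i : ℕ → ℕ) (hi : ∀ k, 1 ≤ i k) :
    Summable (fun k : ℕ =>
      (-1 : ℝ) ^ k * (2 : ℝ) ^ ((1 : ℤ) - ∑ m ∈ Finset.range (k + 1), (i m : ℤ))) := by
  apply Summable.of_norm_bounded
    (summable_geometric_of_lt_one (by norm_num : (0:ℝ) ≤ 1/2) (by norm_num))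
  intro k
  have hS : (k : ℤ) + 1 ≤ ∑ m ∈ Finset.range (k + 1), (i m : ℤ) := by
    calc ((k : ℤ) + 1) = ∑ m ∈ Finset.range (k + 1), (1 : ℤ) := by simp
    _ ≤ ∑ m ∈ Finset.range (k + 1), (i m : ℤ) :=
      Finset.sum_le_sum fun m _ => by exact_mod_cast hi m
  rw [norm_mul, norm_pow, norm_neg, norm_one, one_pow, one_mul, Real.norm_eq_abs,
    abs_of_pos (by positivity)]
  calc (2:ℝ) ^ ((1 : ℤ) - ∑ m ∈ Finset.range (k + 1), (i m : ℤ))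
      ≤ (2:ℝ) ^ (-(k:ℤ)) := zpow_le_zpow_right₀ one_le_two (by omega)
    _ = (1/2 : ℝ) ^ k := by
        rw [zpow_neg, zpow_natCast, one_div, inv_pow]

lemma Mseq_eventually_one (i : ℕ → ℕ) (hi : ∀ k, 1 ≤ i k) (N : ℕ)
    (h1 : ∀ k, N ≤ k → i k = 1) :
    Mseq i = (∑ k ∈ Finset.range N,
        (-1 : ℝ) ^ k * (2 : ℝ) ^ ((1 : ℤ) - ∑ m ∈ Finset.range (k + 1), (i m : ℤ)))
      + (-1 : ℝ) ^ N * (2/3) * (2 : ℝ) ^ (-(∑ m ∈ Finset.range N, (i m : ℤ))) := by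
  have hsum := Mseq_summable i hi
  rw [Mseq, ← Summable.sum_add_tsum_nat_add N hsum]
  congr 1
  set W := ∑ m ∈ Finset.range N, (i m : ℤ) with hW
  have hS : ∀ j : ℕ, ∑ m ∈ Finset.range (j + N + 1), (i m : ℤ) = W + j + 1 := by
    intro j
    induction j with
    | zero => simp [Finset.sum_range_succ, h1 N le_rfl, hW]
    | succ j ih =>
      have : j + 1 + N + 1 = (j + N + 1) + 1 := by omega
      rw [this, Finset.sum_range_succ, ih, h1 (j + N + 1) (by omega)]
      push_cast; ring
  have hterm : ∀ j : ℕ,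
      (-1 : ℝ) ^ (j + N) * (2 : ℝ) ^ ((1 : ℤ) - ∑ m ∈ Finset.range (j + N + 1), (i m : ℤ))
        = ((-1 : ℝ) ^ N * (2 : ℝ) ^ (-W)) * (-(1/2) : ℝ) ^ j := by
    intro j
    rw [hS j, show (1 : ℤ) - (W + ↑j + 1) = -W + (-(j:ℤ)) by ring, zpow_add₀ (two_ne_zero)]
    have hnp : (-(1/2) : ℝ) ^ j = (-1 : ℝ) ^ j * (1/2) ^ j := neg_pow _ _
    simp only [zpow_neg, zpow_natCast, pow_add]
    rw [hnp, one_div, inv_pow]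
    ring
  rw [tsum_congr hterm, tsum_mul_left, tsum_geometric_of_norm_lt_one (by rw [norm_neg]; norm_num)]
  norm_num
  ring

lemma summable_p (p : ℕ → ℝ) (hpsum : ∑' j : ℕ, p (j + 1) = 1) :
    Summable (fun j => p (j + 1)) := by
  by_contra h
  rw [tsum_eq_zero_of_not_summable h] at hpsum
  norm_num at hpsum

lemma phat_nonneg (p : ℕ → ℝ) (hp : ∀ j, 1 ≤ j → 0 < p j ∧ p j < 1) (j : ℕ) :
    0 ≤ phat p j :=
  Finset.sum_nonneg fun m hm => (hp m (Finset.mem_Ico.mp hm).1).1.le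

lemma phat_eq_range (p : ℕ → ℝ) (j : ℕ) :
    phat p j = ∑ k ∈ Finset.range (j - 1), p (k + 1) := by
  rw [phat, Finset.sum_Ico_eq_sum_range]
  exact Finset.sum_congr rfl fun k _ => by rw [add_comm]

lemma phat_succ (p : ℕ → ℝ) (j : ℕ) (hj : 1 ≤ j) : phat p (j + 1) = phat p j + p j :=
  Finset.sum_Ico_succ_top hj _

lemma phat_tendsto (p : ℕ → ℝ) (hpsum : ∑' j : ℕ, p (j + 1) = 1) :
    Filter.Tendsto (fun j => phat p (j + 1)) Filter.atTop (nhds 1) := by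
  have h := (summable_p p hpsum).hasSum.tendsto_sum_nat
  rw [hpsum] at h
  refine h.congr fun j => ?_
  rw [phat_eq_range]
  simp

lemma exists_dig (p : ℕ → ℝ) (hpsum : ∑' j : ℕ, p (j + 1) = 1) (x : ℝ) (hx1 : x < 1) :
    ∃ j, 1 ≤ j ∧ x < phat p (j + 1) := by
  have h := (phat_tendsto p hpsum).eventually_const_lt hx1
  rcases (h.and (Filter.eventually_ge_atTop 1)).exists with ⟨j, hj1, hj2⟩
  exact ⟨j, hj2, hj1⟩

/-- The first digit of `x`. -/
noncomputable def dig (p : ℕ → ℝ) (x : ℝ) : ℕ := sInf {j | 1 ≤ j ∧ x < phat p (j + 1)}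

/-- The transfer (shift) map for the expansion. -/
noncomputable def trf (p : ℕ → ℝ) (x : ℝ) : ℝ := (x - phat p (dig p x)) / p (dig p x)

lemma dig_spec (p : ℕ → ℝ) (hpsum : ∑' j : ℕ, p (j + 1) = 1) (x : ℝ) (hx1 : x < 1) :
    1 ≤ dig p x ∧ x < phat p (dig p x + 1) :=
  Nat.sInf_mem (Set.nonempty_def.mpr (exists_dig p hpsum x hx1))

lemma phat_dig_le (p : ℕ → ℝ) (hpsum : ∑' j : ℕ, p (j + 1) = 1) (x : ℝ)
    (hx : 0 ≤ x) (hx1 : x < 1) : phat p (dig p x) ≤ x := by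
  rcases eq_or_lt_of_le (dig_spec p hpsum x hx1).1 with h | h
  · rw [← h]
    simpa [phat] using hx
  · have hnot : dig p x - 1 ∉ {j | 1 ≤ j ∧ x < phat p (j + 1)} := by
      exact Nat.notMem_of_lt_sInf (show dig p x - 1 < dig p x by omega)
    simp only [Set.mem_setOf_eq, not_and, not_lt] at hnot
    have h2 := hnot (by omega)
    rwa [show dig p x - 1 + 1 = dig p x by omega] at h2

lemma trf_mem (p : ℕ → ℝ) (hp : ∀ j, 1 ≤ j → 0 < p j ∧ p j < 1)
    (hpsum : ∑' j : ℕ, p (j + 1) = 1) (x : ℝ) (hx : 0 ≤ x) (hx1 : x < 1) :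
    0 ≤ trf p x ∧ trf p x < 1 := by
  have h1 := dig_spec p hpsum x hx1
  have hle := phat_dig_le p hpsum x hx hx1
  have hpd := (hp (dig p x) h1.1).1
  constructor
  · exact div_nonneg (by linarith) hpd.le
  · rw [trf, div_lt_one hpd]
    have := phat_succ p (dig p x) h1.1
    linarith [h1.2]

lemma trf_eq (p : ℕ → ℝ) (hp : ∀ j, 1 ≤ j → 0 < p j ∧ p j < 1)
    (hpsum : ∑' j : ℕ, p (j + 1) = 1) (x : ℝ) (hx1 : x < 1) :
    x = phat p (dig p x) + p (dig p x) * trf p x := by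
  have hpd := (hp (dig p x) (dig_spec p hpsum x hx1).1).1
  rw [trf]
  field_simp
  ring

set_option maxHeartbeats 1000000 in
/-- `M_π` is nowhere monotonic on `[0,1)`: every nondegenerate subinterval of `[0,1)`
(equivalently, every open interval `(a,b)` with `0 ≤ a < b ≤ 1`) contains points
`y₁ < y₂` with `M_π(y₁) < M_π(y₂)` and points `z₁ < z₂` with `M_π(z₁) > M_π(z₂)`. -/
theorem stmt9 (p : ℕ → ℝ) (hp : ∀ j, 1 ≤ j → 0 < p j ∧ p j < 1)
    (hpsum : ∑' j : ℕ, p (j + 1) = 1)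
    (M : ℝ → ℝ)
    (hM : ∀ i : ℕ → ℕ, (∀ k, 1 ≤ i k) → M (piP p i) = Mseq i)
    (a b : ℝ) (ha : 0 ≤ a) (hab : a < b) (hb : b ≤ 1) :
    (∃ y₁ y₂ : ℝ, y₁ ∈ Set.Ioo a b ∧ y₂ ∈ Set.Ioo a b ∧ y₁ < y₂ ∧ M y₁ < M y₂) ∧
    (∃ z₁ z₂ : ℝ, z₁ ∈ Set.Ioo a b ∧ z₂ ∈ Set.Ioo a b ∧ z₁ < z₂ ∧ M z₂ < M z₁) := by
  classical
  set x : ℝ := (a + b) / 2 with hxdef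
  have hxa : a < x := by rw [hxdef]; linarith
  have hxb : x < b := by rw [hxdef]; linarith
  have hx0 : 0 ≤ x := by linarith
  have hx1 : x < 1 := lt_of_lt_of_le hxb hb
  set xs : ℕ → ℝ := fun k => (trf p)^[k] x with hxs
  have hxsmem : ∀ k, 0 ≤ xs k ∧ xs k < 1 := by
    intro k
    induction k with
    | zero => exact ⟨hx0, hx1⟩
    | succ k ih =>
      have hstep : xs (k + 1) = trf p (xs k) := by
        simp only [hxs]; exact Function.iterate_succ_apply' _ _ _
      rw [hstep]
      exact trf_mem p hp hpsum _ ih.1 ih.2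
  set i : ℕ → ℕ := fun k => dig p (xs k) with hi
  have hdig1 : ∀ k, 1 ≤ i k := fun k => (dig_spec p hpsum _ (hxsmem k).2).1
  have key : ∀ n, x = fpi p i n + (∏ m ∈ Finset.range n, p (i m)) * xs n := by
    intro n
    induction n with
    | zero => simp [fpi, hxs]
    | succ n ih =>
      have hstep : xs (n + 1) = trf p (xs n) := by
        simp only [hxs]; exact Function.iterate_succ_apply' _ _ _
      have hxn : xs n = phat p (i n) + p (i n) * xs (n + 1) := by
        rw [hstep]
        exact trf_eq p hp hpsum (xs n) (hxsmem n).2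
      rw [fpi, Finset.sum_range_succ, Finset.prod_range_succ, ← fpi, ih, hxn]
      ring
  -- uniform bound q on the p j
  have hp1 := hp 1 le_rfl
  have hp2 := hp 2 (by norm_num)
  set q : ℝ := max (1 - p 1) (1 - p 2) with hq
  have hq1 : q < 1 := by
    rw [hq]
    apply max_lt <;> linarith [hp1.1, hp2.1]
  have hq0 : 0 < q :=
    lt_of_lt_of_le (by linarith [hp1.2] : (0:ℝ) < 1 - p 1) (le_max_left _ _)
  have hple : ∀ j, 1 ≤ j → p j ≤ q := by
    intro j hj
    rcases eq_or_lt_of_le hj with h | h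
    · have hs : p 1 + p 2 ≤ 1 := by
        have h2 := Summable.sum_le_tsum (Finset.range 2)
          (fun k _ => (hp (k + 1) (by omega)).1.le) (summable_p p hpsum)
        rw [hpsum] at h2
        simpa [Finset.sum_range_succ] using h2
      rw [← h]
      exact le_trans (by linarith) (le_max_right _ _)
    · have h0j : (0 : ℕ) ≠ j - 1 := by omega
      have hs : p 1 + p j ≤ 1 := by
        have h2 := Summable.sum_le_tsum ({0, j - 1} : Finset ℕ)
          (fun k _ => (hp (k + 1) (by omega)).1.le) (summable_p p hpsum)
        rw [hpsum, Finset.sum_pair h0j, show j - 1 + 1 = j by omega] at h2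
        simpa using h2
      exact le_trans (by linarith [hp1.1]) (le_max_left _ _)
  obtain ⟨n, hn⟩ := exists_pow_lt_of_lt_one
    (lt_min (by linarith) (by linarith) : (0:ℝ) < min (x - a) (b - x)) hq1
  set P : ℝ := ∏ m ∈ Finset.range n, p (i m) with hP
  have hP0 : 0 < P := Finset.prod_pos fun m _ => (hp _ (hdig1 m)).1
  have hPq : P ≤ q ^ n := by
    calc P ≤ ∏ m ∈ Finset.range n, q :=
          Finset.prod_le_prod (fun m _ => (hp _ (hdig1 m)).1.le)
            (fun m _ => hple _ (hdig1 m))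
      _ = q ^ n := by rw [Finset.prod_const, Finset.card_range]
  set c : ℝ := fpi p i n with hc
  have hxc : x = c + P * xs n := key n
  have hqn1 : q ^ n < x - a := lt_of_lt_of_le hn (min_le_left _ _)
  have hqn2 : q ^ n < b - x := lt_of_lt_of_le hn (min_le_right _ _)
  have hPx : P * xs n < P := mul_lt_of_lt_one_right hP0 (hxsmem n).2
  have hPx0 : 0 ≤ P * xs n := mul_nonneg hP0.le (hxsmem n).1
  have hca : a < c := by linarith [hPx, hPq, hqn1, hxc]
  have hcx : c ≤ x := by linarith [hxc, hPx0]
  have hcb : c + P < b := by linarith [hcx, hPq, hqn2]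
  -- the three perturbed digit sequences
  set iA : ℕ → ℕ := fun k => if k < n then i k else 1 with hiA
  set iB : ℕ → ℕ := fun k => if k < n then i k else if k = n then 2 else 1 with hiB
  set iC : ℕ → ℕ := fun k => if k < n then i k else if k = n + 1 then 2 else 1 with hiC
  have hdA : ∀ k, 1 ≤ iA k := by
    intro k; simp only [hiA]; split <;> [exact hdig1 k; omega]
  have hdB : ∀ k, 1 ≤ iB k := by
    intro k; simp only [hiB]; split
    · exact hdig1 k
    · split <;> omega
  have hdC : ∀ k, 1 ≤ iC k := by
    intro k; simp only [hiC]; split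
    · exact hdig1 k
    · split <;> omega
  have hagreeA : ∀ m, m < n → iA m = i m := fun m hm => by simp only [hiA]; rw [if_pos hm]
  have hagreeB : ∀ m, m < n → iB m = i m := fun m hm => by simp only [hiB]; rw [if_pos hm]
  have hagreeC : ∀ m, m < n → iC m = i m := fun m hm => by simp only [hiC]; rw [if_pos hm]
  have hiAn : iA n = 1 := by simp only [hiA]; rw [if_neg (by omega)]
  have hiAn1 : iA (n + 1) = 1 := by simp only [hiA]; rw [if_neg (by omega)]
  have hiBn : iB n = 2 := by simp only [hiB]; rw [if_neg (by omega)]; simp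
  have hiBn1 : iB (n + 1) = 1 := by simp only [hiB]; rw [if_neg (by omega), if_neg (by omega)]
  have hiCn : iC n = 1 := by simp only [hiC]; rw [if_neg (by omega), if_neg (by omega)]
  have hiCn1 : iC (n + 1) = 2 := by simp only [hiC]; rw [if_neg (by omega)]; simp
  have hevA : ∀ k, n ≤ k → iA k = 1 := by
    intro k hk; simp only [hiA]; rw [if_neg (by omega)]
  have hevB : ∀ k, n + 1 ≤ k → iB k = 1 := by
    intro k hk; simp only [hiB]; rw [if_neg (by omega), if_neg (by omega)]
  have hevC : ∀ k, n + 1 + 1 ≤ k → iC k = 1 := by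
    intro k hk; simp only [hiC]; rw [if_neg (by omega), if_neg (by omega)]
  have hphat2 : phat p 2 = p 1 := by
    rw [phat, show Finset.Ico 1 2 = ({1} : Finset ℕ) from rfl, Finset.sum_singleton]
  -- products agree on the prefix
  have hprod : ∀ (j : ℕ → ℕ), (∀ m, m < n → j m = i m) →
      ∏ m ∈ Finset.range n, p (j m) = P := by
    intro j hj
    refine Finset.prod_congr rfl fun m hm => ?_
    rw [Finset.mem_range] at hm
    rw [hj m hm]
  -- the three points
  have hA : piP p iA = c := by
    rw [piP_eventually_one p iA n hevA, fpi_congr p iA i n hagreeA]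
  have hB : piP p iB = c + p 1 * P := by
    rw [piP_eventually_one p iB (n + 1) hevB, fpi, Finset.sum_range_succ, ← fpi,
      fpi_congr p iB i n hagreeB, hiBn, hphat2, hprod iB hagreeB]
  have hC : piP p iC = c + p 1 * (P * p 1) := by
    rw [piP_eventually_one p iC (n + 1 + 1) hevC, fpi, Finset.sum_range_succ,
      Finset.sum_range_succ, ← fpi, fpi_congr p iC i n hagreeC, hiCn, hiCn1, phat_one,
      hphat2, Finset.prod_range_succ, hprod iC hagreeC, hiCn]
    ring
  -- Mseq values
  set W : ℤ := ∑ m ∈ Finset.range n, (i m : ℤ) with hW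
  set G : ℝ := ∑ k ∈ Finset.range n,
    (-1 : ℝ) ^ k * (2 : ℝ) ^ ((1 : ℤ) - ∑ m ∈ Finset.range (k + 1), (i m : ℤ)) with hG
  set t : ℝ := (2 : ℝ) ^ (-W) with ht
  have ht0 : 0 < t := by rw [ht]; positivity
  have hsum_pre : ∀ (j : ℕ → ℕ), (∀ m, m < n → j m = i m) →
      ∑ m ∈ Finset.range n, (j m : ℤ) = W := by
    intro j hj
    refine Finset.sum_congr rfl fun m hm => ?_
    rw [Finset.mem_range] at hm
    rw [hj m hm]
  have hG_pre : ∀ (j : ℕ → ℕ), (∀ m, m < n → j m = i m) →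
      (∑ k ∈ Finset.range n,
        (-1 : ℝ) ^ k * (2 : ℝ) ^ ((1 : ℤ) - ∑ m ∈ Finset.range (k + 1), (j m : ℤ))) = G := by
    intro j hj
    refine Finset.sum_congr rfl fun k hk => ?_
    rw [Finset.mem_range] at hk
    have hsk : ∑ m ∈ Finset.range (k + 1), (j m : ℤ)
        = ∑ m ∈ Finset.range (k + 1), (i m : ℤ) := by
      refine Finset.sum_congr rfl fun m hm => ?_
      rw [Finset.mem_range] at hm
      rw [hj m (by omega)]
    rw [hsk]
  -- zpow computations
  have hz0 : (2:ℝ) ^ ((1:ℤ) - (W + 1)) = t := by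
    rw [ht, show (1:ℤ) - (W + 1) = -W by ring]
  have hz1 : (2:ℝ) ^ ((1:ℤ) - (W + 2)) = t / 2 := by
    rw [ht, show (1:ℤ) - (W + 2) = -W + (-1) by ring, zpow_add₀ (two_ne_zero)]
    norm_num
    ring
  have hz2 : (2:ℝ) ^ ((1:ℤ) - (W + 3)) = t / 4 := by
    rw [ht, show (1:ℤ) - (W + 3) = -W + (-2) by ring, zpow_add₀ (two_ne_zero)]
    norm_num
    ring
  have hz3 : (2:ℝ) ^ (-(W + 2)) = t / 4 := by
    rw [ht, show -(W + 2) = -W + (-2) by ring, zpow_add₀ (two_ne_zero)]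
    norm_num
    ring
  have hz4 : (2:ℝ) ^ (-(W + 3)) = t / 8 := by
    rw [ht, show -(W + 3) = -W + (-3) by ring, zpow_add₀ (two_ne_zero)]
    norm_num
    ring
  -- digit sums of the perturbed sequences
  have hSA1 : ∑ m ∈ Finset.range (n + 1), (iA m : ℤ) = W + 1 := by
    rw [Finset.sum_range_succ, hsum_pre iA hagreeA, hiAn]; norm_num
  have hSA2 : ∑ m ∈ Finset.range (n + 1 + 1), (iA m : ℤ) = W + 2 := by
    rw [Finset.sum_range_succ, hSA1, hiAn1]; push_cast; ring
  have hSB1 : ∑ m ∈ Finset.range (n + 1), (iB m : ℤ) = W + 2 := by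
    rw [Finset.sum_range_succ, hsum_pre iB hagreeB, hiBn]; norm_num
  have hSB2 : ∑ m ∈ Finset.range (n + 1 + 1), (iB m : ℤ) = W + 3 := by
    rw [Finset.sum_range_succ, hSB1, hiBn1]; push_cast; ring
  have hSC1 : ∑ m ∈ Finset.range (n + 1), (iC m : ℤ) = W + 1 := by
    rw [Finset.sum_range_succ, hsum_pre iC hagreeC, hiCn]; norm_num
  have hSC2 : ∑ m ∈ Finset.range (n + 1 + 1), (iC m : ℤ) = W + 3 := by
    rw [Finset.sum_range_succ, hSC1, hiCn1]; push_cast; ring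
  have hMA : Mseq iA = G + (-1:ℝ) ^ n * ((2:ℝ)/3) * t := by
    rw [Mseq_eventually_one iA hdA (n + 1 + 1) (fun k hk => hevA k (by omega)),
      Finset.sum_range_succ, Finset.sum_range_succ, hG_pre iA hagreeA,
      hSA1, hSA2, hz0, hz1, hz3]
    ring
  have hMB : Mseq iB = G + (-1:ℝ) ^ n * ((1:ℝ)/3) * t := by
    rw [Mseq_eventually_one iB hdB (n + 1 + 1) (fun k hk => hevB k (by omega)),
      Finset.sum_range_succ, Finset.sum_range_succ, hG_pre iB hagreeB,
      hSB1, hSB2, hz1, hz2, hz4]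
    ring
  have hMC : Mseq iC = G + (-1:ℝ) ^ n * ((5:ℝ)/6) * t := by
    rw [Mseq_eventually_one iC hdC (n + 1 + 1) (fun k hk => hevC k (by omega)),
      Finset.sum_range_succ, Finset.sum_range_succ, hG_pre iC hagreeC,
      hSC1, hSC2, hz0, hz2, hz4]
    ring
  -- values of M at the three points
  have hMc : M c = G + (-1:ℝ) ^ n * ((2:ℝ)/3) * t := by rw [← hA, hM iA hdA, hMA]
  have hMb : M (c + p 1 * P) = G + (-1:ℝ) ^ n * ((1:ℝ)/3) * t := by
    rw [← hB, hM iB hdB, hMB]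
  have hMcc : M (c + p 1 * (P * p 1)) = G + (-1:ℝ) ^ n * ((5:ℝ)/6) * t := by
    rw [← hC, hM iC hdC, hMC]
  -- membership in (a, b)
  have hp1pos := hp1.1
  have hp1lt := hp1.2
  have hposB : 0 < p 1 * P := mul_pos hp1pos hP0
  have hposC : 0 < p 1 * (P * p 1) := mul_pos hp1pos (mul_pos hP0 hp1pos)
  have hsmB : p 1 * P < P := mul_lt_of_lt_one_left hP0 hp1lt
  have hsmC : p 1 * (P * p 1) < p 1 * P :=
    mul_lt_mul_of_pos_left (mul_lt_of_lt_one_right hP0 hp1lt) hp1pos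
  have hmemA : c ∈ Set.Ioo a b := ⟨hca, lt_of_le_of_lt hcx hxb⟩
  have hmemB : c + p 1 * P ∈ Set.Ioo a b :=
    ⟨by linarith, by linarith⟩
  have hmemC : c + p 1 * (P * p 1) ∈ Set.Ioo a b :=
    ⟨by linarith, by linarith⟩
  have hltB : c < c + p 1 * P := by linarith
  have hltC : c < c + p 1 * (P * p 1) := by linarith
  rcases Nat.even_or_odd n with he | ho
  · have hen : (-1:ℝ) ^ n = 1 := he.neg_one_pow
    refine ⟨⟨c, c + p 1 * (P * p 1), hmemA, hmemC, hltC, ?_⟩,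
      ⟨c, c + p 1 * P, hmemA, hmemB, hltB, ?_⟩⟩
    · rw [hMc, hMcc, hen]; linarith
    · rw [hMc, hMb, hen]; linarith
  · have hon : (-1:ℝ) ^ n = -1 := ho.neg_one_pow
    refine ⟨⟨c, c + p 1 * P, hmemA, hmemB, hltB, ?_⟩,
      ⟨c, c + p 1 * (P * p 1), hmemA, hmemC, hltC, ?_⟩⟩
    · rw [hMc, hMb, hon]; linarith
    · rw [hMc, hMcc, hon]; linarith
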